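/- Let G = Q8 be the quaternion group of order 8 and let A be a subgroup of Aut(Q8) of order 3. Then Q8 has a unique maximal A-invariant subgroup, namely its center of order 2, and Q8 is not cyclic. -/
import Mathlib


/-- A subgroup `H` is invariant under a subgroup `A` of the automorphism group. -/
def SubAInvariant {G : Type*} [Group G] (A : Subgroup (MulAut G)) (H : Subgroup G) : Prop :=
  ∀ a ∈ A, H.map a.toMonoidHom = H

/-- `M` is a maximal `A`-invariant subgroup of `G`. -/
def SubMaxAInvariant {G : Type*} [Group G] (A : Subgroup (MulAut G)) (M : Subgroup G) : Prop :=
  SubAInvariant A M ∧ M ≠ ⊤ ∧ ∀ K : Subgroup G, SubAInvariant A K → M < K → K = ⊤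

namespace Q8Aux

abbrev Q8 := QuaternionGroup 2

/-- decidable stand-in for membership in `zpowers x` -/
def inZ (x u : Q8) : Prop := ∃ n : Fin 8, u = x ^ (n : ℕ)

instance (x u : Q8) : Decidable (inZ x u) := by unfold inZ; infer_instance

lemma pow8 : ∀ x : Q8, x ^ 8 = 1 := by decide

lemma zmem {x u : Q8} : u ∈ Subgroup.zpowers x ↔ inZ x u := by
  constructor
  · intro h
    rw [← mem_powers_iff_mem_zpowers] at h
    obtain ⟨n, hn⟩ := h
    exact ⟨⟨n % 8, Nat.mod_lt _ (by norm_num)⟩, by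
      simp only [← hn]; exact (pow_eq_pow_mod n (pow8 x))⟩
  · rintro ⟨n, rfl⟩
    exact Subgroup.mem_zpowers_iff.mpr ⟨(n : ℕ), by exact_mod_cast rfl⟩

lemma cardQ8 : Nat.card Q8 = 8 := by
  rw [Nat.card_eq_fintype_card]; decide

lemma D1 : ∀ x : Q8, x ∉ Subgroup.center Q8 → x ^ 2 ≠ 1 ∧ x ^ 4 = 1 := by decide

lemma order4 {x : Q8} (hx : x ∉ Subgroup.center Q8) : orderOf x = 4 := by
  obtain ⟨h2, h4⟩ := D1 x hx
  have := orderOf_eq_prime_pow (p := 2) (n := 1) (x := x)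
    (by simpa using h2) (by norm_num; exact h4)
  simpa using this

lemma D2 : ∀ x u : Q8, x ∉ Subgroup.center Q8 → inZ x u → u ^ 2 ≠ 1 →
    u = x ∨ u = x⁻¹ := by decide

lemma D3 : ∀ x : Q8, x ∉ Subgroup.center Q8 →
    ∃ y : Q8, ¬ inZ x y ∧ y ∉ Subgroup.center Q8 := by decide

set_option synthInstance.maxHeartbeats 1000000 in
set_option synthInstance.maxSize 1024 in
lemma D4 : ∀ x y u : Q8, x ∉ Subgroup.center Q8 → y ∉ Subgroup.center Q8 →
    ¬ inZ x y → ¬ inZ x u → u ^ 2 ≠ 1 →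
    u = y ∨ u = y⁻¹ ∨ u = x * y ∨ u = x⁻¹ * y := by decide

lemma D5 : ∀ x y : Q8, x ∉ Subgroup.center Q8 → x * (x * (x * y)) ≠ y := by decide

lemma D6 : ∀ x y : Q8, x ∉ Subgroup.center Q8 → x⁻¹ * (x⁻¹ * (x⁻¹ * y)) ≠ y := by decide

lemma D7 : ∀ x : Q8, inZ x x ∧ inZ x x⁻¹ := by decide

lemma D8 : ∀ x y : Q8, y ∉ Subgroup.center Q8 → y⁻¹ ≠ y := by decide

/-- fixed points of an automorphism form a subgroup -/
def fixedSub (a : MulAut Q8) : Subgroup Q8 where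
  carrier := {g | a g = g}
  one_mem' := map_one a
  mul_mem' := by intro p q hp hq; simp only [Set.mem_setOf_eq, map_mul] at *; rw [hp, hq]
  inv_mem' := by intro p hp; simp only [Set.mem_setOf_eq, map_inv] at *; rw [hp]

/-- A subgroup containing a non-central element `x` and an element outside `zpowers x`
is the whole group. -/
lemma top_of (H : Subgroup Q8) (x y : Q8) (hx : x ∉ Subgroup.center Q8)
    (hxH : x ∈ H) (hyH : y ∈ H) (hy : y ∉ Subgroup.zpowers x) : H = ⊤ := by
  have hle : Subgroup.zpowers x ≤ H := Subgroup.zpowers_le.mpr hxH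
  have hcz : Nat.card (Subgroup.zpowers x) = 4 := by
    rw [Nat.card_zpowers]; exact order4 hx
  have hne : Nat.card H ≠ 4 := by
    intro h4
    exact hy (Subgroup.eq_of_le_of_card_ge hle (by omega) ▸ hyH)
  have hge : 4 ≤ Nat.card H := hcz ▸ Subgroup.card_le_of_le hle
  have hdvd : Nat.card H ∣ 8 := cardQ8 ▸ Subgroup.card_subgroup_dvd_card H
  have hle8 : Nat.card H ≤ 8 := Nat.le_of_dvd (by norm_num) hdvd
  have h8 : Nat.card H = 8 := by
    interval_cases h : Nat.card H <;> omega
  exact Subgroup.eq_top_of_card_eq H (by rw [h8, cardQ8])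

/-- Key lemma: an automorphism of order 3 moves every noncentral element out of
the cyclic subgroup it generates. -/
lemma key (a : MulAut Q8) (h3 : a ^ 3 = 1) (h1 : a ≠ 1) (x : Q8)
    (hx : x ∉ Subgroup.center Q8) : a x ∉ Subgroup.zpowers x := by
  have apow : ∀ g : Q8, a (a (a g)) = g := by
    intro g
    have : ((a * a) * a) g = (1 : MulAut Q8) g := by
      rw [show (a * a) * a = a ^ 3 by rw [pow_succ, pow_two]]; rw [h3]
    simpa [MulAut.mul_apply] using this
  have hmem2 : ∀ z : Q8, z ∉ Subgroup.center Q8 → (a z) ^ 2 ≠ 1 := by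
    intro z hz h
    have : a (z ^ 2) = a 1 := by rw [map_pow, h, map_one]
    exact (D1 z hz).1 (a.injective this)
  intro hmem
  rw [zmem] at hmem
  rcases D2 x (a x) hx hmem (hmem2 x hx) with hax | hax
  · -- a x = x
    obtain ⟨y, hyz, hyc⟩ := D3 x hx
    have haxi : a x⁻¹ = x⁻¹ := by rw [map_inv, hax]
    have htz : ¬ inZ x (a y) := by
      intro htz
      rcases D2 x (a y) hx htz (hmem2 y hyc) with h | h
      · have hyx : y = x := a.injective (h.trans hax.symm)
        exact hyz (by rw [hyx]; exact (D7 x).1)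
      · have hyx : y = x⁻¹ := a.injective (h.trans haxi.symm)
        exact hyz (by rw [hyx]; exact (D7 x).2)
    rcases D4 x y (a y) hx hyc hyz htz (hmem2 y hyc) with h | h | h | h
    · -- a y = y : a fixes x and y, so a = 1
      have htop : fixedSub a = ⊤ := top_of _ x y hx hax h (fun hc => hyz (zmem.mp hc))
      apply h1
      ext g
      have : g ∈ fixedSub a := htop ▸ Subgroup.mem_top g
      exact this
    · -- a y = y⁻¹
      have h2 : a (a y) = y := by rw [h, map_inv, h, inv_inv]
      have h3' : a (a (a y)) = y⁻¹ := by rw [h2, h]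
      rw [apow y] at h3'
      exact D8 x y hyc h3'.symm
    · -- a y = x * y
      have h3' : a (a (a y)) = x * (x * (x * y)) := by
        simp only [h, map_mul, hax]
      rw [apow y] at h3'
      exact D5 x y hx h3'.symm
    · -- a y = x⁻¹ * y
      have h3' : a (a (a y)) = x⁻¹ * (x⁻¹ * (x⁻¹ * y)) := by
        simp only [h, map_mul, haxi]
      rw [apow y] at h3'
      exact D6 x y hx h3'.symm
  · -- a x = x⁻¹
    have h2 : a (a x) = x := by rw [hax, map_inv, hax, inv_inv]
    have h3' : a (a (a x)) = x⁻¹ := by rw [h2, hax]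
    rw [apow x] at h3'
    have hx2 : x ^ 2 = 1 := by
      rw [pow_two]; nth_rewrite 2 [h3']; exact mul_inv_cancel x
    exact (D1 x hx).1 hx2

lemma center_card : Nat.card (Subgroup.center Q8) = 2 := by
  rw [Nat.card_eq_fintype_card]; decide

lemma center_invariant (A : Subgroup (MulAut Q8)) : SubAInvariant A (Subgroup.center Q8) := by
  intro e _
  rw [Subgroup.map_equiv_eq_comap_symm']
  exact Subgroup.characteristic_iff_comap_eq.mp inferInstance e.symm

lemma center_ne_top : Subgroup.center Q8 ≠ ⊤ := by
  intro h
  have h2 := center_card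
  rw [h, Subgroup.card_top, cardQ8] at h2
  omega

end Q8Aux

open Q8Aux in
theorem stmt4 (A : Subgroup (MulAut (QuaternionGroup 2))) (hA : Nat.card A = 3) :
    (∀ M : Subgroup (QuaternionGroup 2),
        SubMaxAInvariant A M ↔ M = Subgroup.center (QuaternionGroup 2)) ∧
      Nat.card (Subgroup.center (QuaternionGroup 2)) = 2 ∧
      ¬ IsCyclic (QuaternionGroup 2) := by
  -- find an element of order 3 in A
  have hnt : Nontrivial A := by
    have : Finite A := inferInstance
    exact Finite.one_lt_card_iff_nontrivial.mp (by omega)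
  obtain ⟨b, hb⟩ := exists_ne (1 : A)
  have hob : orderOf b = 3 := by
    have hdvd : orderOf b ∣ 3 := hA ▸ orderOf_dvd_natCard b
    have h1 : orderOf b ≠ 1 := by simpa [orderOf_eq_one_iff] using hb
    rcases (Nat.dvd_prime Nat.prime_three).mp hdvd with h | h
    · exact absurd h h1
    · exact h
  set a : MulAut Q8 := (b : MulAut Q8) with hadef
  have haA : a ∈ A := b.2
  have ha3 : a ^ 3 = 1 := by
    have hb3 : b ^ 3 = 1 := hob ▸ pow_orderOf_eq_one b
    have := congrArg (Subtype.val) hb3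
    simpa using this
  have ha1 : a ≠ 1 := by
    intro h
    exact hb (Subtype.ext h)
  -- main tool: any A-invariant subgroup containing a noncentral element is ⊤
  have tool : ∀ K : Subgroup Q8, SubAInvariant A K →
      (∃ x ∈ K, x ∉ Subgroup.center Q8) → K = ⊤ := by
    rintro K hK ⟨x, hxK, hxc⟩
    have haxK : a x ∈ K := by
      have h := hK a haA
      rw [← h]
      exact ⟨x, hxK, rfl⟩
    exact top_of K x (a x) hxc hxK haxK (key a ha3 ha1 x hxc)
  refine ⟨?_, center_card, ?_⟩
  · intro M
    constructor
    · rintro ⟨hinv, hne, hmax⟩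
      by_cases hle : M ≤ Subgroup.center Q8
      · rcases hle.lt_or_eq with hlt | heq
        · exact absurd (hmax _ (center_invariant A) hlt) center_ne_top
        · exact heq
      · obtain ⟨x, hxM, hxc⟩ := SetLike.not_le_iff_exists.mp hle
        exact absurd (tool M hinv ⟨x, hxM, hxc⟩) hne
    · rintro rfl
      refine ⟨center_invariant A, center_ne_top, ?_⟩
      intro K hK hlt
      obtain ⟨x, hxK, hxc⟩ := SetLike.exists_of_lt hlt
      exact tool K hK ⟨x, hxK, hxc⟩
  · intro h
    obtain ⟨g, hg⟩ := h.exists_generator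
    have htop : Subgroup.zpowers g = ⊤ := by
      rw [eq_top_iff]; intro z _; exact hg z
    have ho : orderOf g = 8 := by
      rw [← Nat.card_zpowers, htop, Subgroup.card_top, cardQ8]
    have h4 : g ^ 4 = 1 := by
      have hall : ∀ z : Q8, z ^ 4 = 1 := by decide
      exact hall g
    have hdvd := orderOf_dvd_of_pow_eq_one h4
    rw [ho] at hdvd
    omega
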